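/- Every non-constant real-analytic function v : 𝕋 → ℝ belongs to the class 𝒱¹(𝕋, ℝ): there exist ε₀ > 0, β > 0 and an integer s ≥ 1 such that for all 0 < ε ≤ ε₀ and all a ∈ ℝ, the set {x ∈ 𝕋 : |v(x) - a| < ε} consists of at most s intervals, each of length at most ε^β. -/

import Mathlib

open Set Metric Filter

namespace Stmt10


variable {v : ℝ → ℝ}

/-- zero set of `deriv v` in `[-1,2]`. -/
def Zset (v : ℝ → ℝ) : Set ℝ := {x | x ∈ Icc (-1:ℝ) 2 ∧ deriv v x = 0}

lemma vdiff (han : ∀ x : ℝ, AnalyticAt ℝ v x) : Differentiable ℝ v :=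
  fun x => (han x).differentiableAt

lemma dv_an (han : ∀ x : ℝ, AnalyticAt ℝ v x) (x : ℝ) : AnalyticAt ℝ (deriv v) x := by
  have h : AnalyticOnNhd ℝ v univ := fun y _ => han y
  exact h.deriv x (mem_univ x)

lemma dv_cont (han : ∀ x : ℝ, AnalyticAt ℝ v x) : Continuous (deriv v) :=
  continuous_iff_continuousAt.2 fun x => (dv_an han x).continuousAt

lemma dv_ne (han : ∀ x : ℝ, AnalyticAt ℝ v x) (hnc : ∃ x y : ℝ, v x ≠ v y) (x : ℝ) :
    ¬ (∀ᶠ y in nhds x, deriv v y = 0) := by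
  intro h
  have hall : EqOn (deriv v) 0 univ := by
    have h' : AnalyticOnNhd ℝ (deriv v) univ := fun y _ => dv_an han y
    exact h'.eqOn_zero_of_preconnected_of_eventuallyEq_zero isPreconnected_univ (mem_univ x) h
  have hconst := is_const_of_deriv_eq_zero (vdiff han) (fun y => hall (mem_univ y))
  obtain ⟨a, b, hab⟩ := hnc
  exact hab (hconst a b)

lemma Z_finite (han : ∀ x : ℝ, AnalyticAt ℝ v x) (hnc : ∃ x y : ℝ, v x ≠ v y) :
    (Zset v).Finite := by
  have hZc : IsCompact (Zset v) := by
    have hcl : IsClosed (Zset v) := by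
      have : Zset v = Icc (-1:ℝ) 2 ∩ (deriv v) ⁻¹' {0} := by
        ext t; simp [Zset, and_comm]
      rw [this]
      exact isClosed_Icc.inter ((isClosed_singleton).preimage (dv_cont han))
    exact isCompact_Icc.of_isClosed_subset hcl (fun t ht => ht.1)
  obtain ⟨t, hts, hsub⟩ := hZc.elim_nhds_subcover
      (fun z => {x | x = z ∨ deriv v x ≠ 0}) (by
    intro z hz
    have h2 : ∀ᶠ y in nhdsWithin z {z}ᶜ, deriv v y ≠ 0 :=
      ((dv_an han z).eventually_eq_zero_or_eventually_ne_zero).resolve_left (dv_ne han hnc z)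
    rw [eventually_nhdsWithin_iff] at h2
    filter_upwards [h2] with y hy
    rcases eq_or_ne y z with h | h
    · exact Or.inl h
    · exact Or.inr (hy h))
  apply Set.Finite.subset t.finite_toSet
  intro z hz
  obtain ⟨x, hx, hzx⟩ := mem_iUnion₂.1 (hsub hz)
  rcases hzx with h | h
  · exact h ▸ hx
  · exact absurd hz.2 h

lemma loj_near (f : ℝ → ℝ) (z : ℝ) (hA : AnalyticAt ℝ f z) (hne : ¬ (∀ᶠ y in nhds z, f y = 0)) :
    ∃ n : ℕ, ∃ c : ℝ, 0 < c ∧ ∃ r : ℝ, 0 < r ∧ ∀ x : ℝ, |x - z| < r → c * |x - z| ^ n ≤ |f x| := by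
  have hord : analyticOrderAt f z ≠ ⊤ := fun h => hne (analyticOrderAt_eq_top.1 h)
  lift analyticOrderAt f z to ℕ using hord with n hn
  obtain ⟨g, hg, hgz, hev⟩ := (hA.analyticOrderAt_eq_natCast (n := n)).1 hn.symm
  have hgzpos : (0:ℝ) < |g z| := abs_pos.2 hgz
  have h2 : ∀ᶠ x in nhds z, |g z| / 2 ≤ |g x| :=
    (hg.continuousAt.abs).eventually (eventually_ge_nhds (by linarith))
  obtain ⟨r, hr, hball⟩ := Metric.eventually_nhds_iff.1 (hev.and h2)
  refine ⟨n, |g z| / 2, by linarith, r, hr, fun x hx => ?_⟩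
  have hx' : dist x z < r := by rwa [Real.dist_eq]
  obtain ⟨heq, hge⟩ := hball hx'
  rw [heq]
  have : |(x - z) ^ n • g x| = |x - z| ^ n * |g x| := by
    rw [smul_eq_mul, abs_mul, abs_pow]
  rw [this]
  have h1 : (0:ℝ) ≤ |x - z| ^ n := pow_nonneg (abs_nonneg _) n
  calc |g z| / 2 * |x - z| ^ n = |x - z| ^ n * (|g z| / 2) := by ring
    _ ≤ |x - z| ^ n * |g x| := by
        exact mul_le_mul_of_nonneg_left hge h1



lemma exists_pos_forall_le_abs {K : Set ℝ} (hK : IsCompact K) {f : ℝ → ℝ}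
    (hf : Continuous f) (h0 : ∀ x ∈ K, f x ≠ 0) : ∃ c : ℝ, 0 < c ∧ ∀ x ∈ K, c ≤ |f x| := by
  rcases K.eq_empty_or_nonempty with h | hne
  · exact ⟨1, one_pos, by simp [h]⟩
  · obtain ⟨x₀, hx₀, hmin⟩ := hK.exists_isMinOn hne (hf.abs.continuousOn)
    exact ⟨|f x₀|, abs_pos.2 (h0 x₀ hx₀), fun x hx => hmin hx⟩

lemma loj (han : ∀ x : ℝ, AnalyticAt ℝ v x) (hnc : ∃ x y : ℝ, v x ≠ v y) :
    ∃ c : ℝ, 0 < c ∧ ∃ M : ℕ, ∀ x ∈ Icc (0:ℝ) 1, ∀ δ : ℝ, 0 ≤ δ → δ ≤ 3 →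
      (∀ z ∈ Zset v, δ ≤ |x - z|) → c * δ ^ M ≤ |deriv v x| := by
  choose n cz hcz r hr hbd using fun z : ℝ =>
    loj_near (deriv v) z (dv_an han z) (dv_ne han hnc z)
  set Zf : Finset ℝ := (Z_finite han hnc).toFinset with hZf
  set Zf' : Finset ℝ := insert (0:ℝ) Zf with hZf'
  have hne' : Zf'.Nonempty := Finset.insert_nonempty _ _
  set M : ℕ := Zf'.sup n with hM
  set r₀ : ℝ := min 1 (Zf'.inf' hne' r) with hr₀
  have hr₀pos : 0 < r₀ := lt_min one_pos (by rw [Finset.lt_inf'_iff]; exact fun z _ => hr z)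
  have hr₀le1 : r₀ ≤ 1 := min_le_left _ _
  set c₁ : ℝ := Zf'.inf' hne' cz with hc₁
  have hc₁pos : 0 < c₁ := by rw [hc₁, Finset.lt_inf'_iff]; exact fun z _ => hcz z
  set Fa : Set ℝ := Icc (0:ℝ) 1 ∩ ⋂ z ∈ Zf, {x : ℝ | r₀ ≤ |x - z|} with hFa
  have hFac : IsCompact Fa := by
    apply isCompact_Icc.of_isClosed_subset _ (inter_subset_left)
    refine isClosed_Icc.inter (isClosed_biInter fun z _ => ?_)
    exact isClosed_le continuous_const ((continuous_id.sub continuous_const).abs)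
  have h0 : ∀ x ∈ Fa, deriv v x ≠ 0 := by
    rintro x ⟨hx1, hx2⟩ hzero
    have hxZ : x ∈ Zset v := ⟨⟨by linarith [hx1.1], by linarith [hx1.2]⟩, hzero⟩
    have hxZf : x ∈ Zf := by rw [hZf, Set.Finite.mem_toFinset]; exact hxZ
    have := mem_iInter₂.1 hx2 x hxZf
    simp only [mem_setOf_eq, sub_self, abs_zero] at this
    linarith
  obtain ⟨c₀, hc₀pos, hc₀⟩ := exists_pos_forall_le_abs hFac (dv_cont han) h0
  have h3M : (0:ℝ) < 3 ^ M := by positivity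
  refine ⟨min c₁ (c₀ / 3 ^ M), lt_min hc₁pos (by positivity), M, ?_⟩
  intro x hx δ hδ0 hδ3 hsep
  by_cases hcase : ∃ z ∈ Zf, |x - z| < r₀
  · obtain ⟨z, hz, hlt⟩ := hcase
    have hzZ : z ∈ Zset v := by rwa [hZf, Set.Finite.mem_toFinset] at hz
    have hδxz : δ ≤ |x - z| := hsep z hzZ
    have hrle : r₀ ≤ r z := le_trans (min_le_right _ _) (Finset.inf'_le r (Finset.mem_insert_of_mem hz))
    have h1 : cz z * |x - z| ^ (n z) ≤ |deriv v x| := hbd z x (lt_of_lt_of_le hlt hrle)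
    have hδ1 : δ ≤ 1 := le_trans hδxz (le_trans hlt.le hr₀le1)
    have hnM : n z ≤ M := Finset.le_sup (Finset.mem_insert_of_mem hz)
    have hc1z : c₁ ≤ cz z := Finset.inf'_le cz (Finset.mem_insert_of_mem hz)
    calc min c₁ (c₀ / 3 ^ M) * δ ^ M ≤ c₁ * δ ^ M := by
          apply mul_le_mul_of_nonneg_right (min_le_left _ _) (by positivity)
      _ ≤ cz z * δ ^ M := mul_le_mul_of_nonneg_right hc1z (by positivity)
      _ ≤ cz z * δ ^ (n z) := by
          exact mul_le_mul_of_nonneg_left (pow_le_pow_of_le_one hδ0 hδ1 hnM) (hcz z).le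
      _ ≤ cz z * |x - z| ^ (n z) := by
          exact mul_le_mul_of_nonneg_left (pow_le_pow_left₀ hδ0 hδxz _) (hcz z).le
      _ ≤ |deriv v x| := h1
  · push_neg at hcase
    have hxFa : x ∈ Fa := ⟨hx, mem_iInter₂.2 fun z hz => hcase z hz⟩
    calc min c₁ (c₀ / 3 ^ M) * δ ^ M ≤ (c₀ / 3 ^ M) * δ ^ M :=
          mul_le_mul_of_nonneg_right (min_le_right _ _) (by positivity)
      _ ≤ (c₀ / 3 ^ M) * 3 ^ M := by
          exact mul_le_mul_of_nonneg_left (pow_le_pow_left₀ hδ0 hδ3 _) (by positivity)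
      _ = c₀ := div_mul_cancel₀ _ (ne_of_gt h3M)
      _ ≤ |deriv v x| := hc₀ x hxFa


lemma short (han : ∀ x : ℝ, AnalyticAt ℝ v x) {c : ℝ} {M : ℕ} (hc : 0 < c)
    (hloj : ∀ x ∈ Icc (0:ℝ) 1, ∀ δ : ℝ, 0 ≤ δ → δ ≤ 3 →
      (∀ z ∈ Zset v, δ ≤ |x - z|) → c * δ ^ M ≤ |deriv v x|)
    (hfin : (Zset v).Finite) {a ε x y : ℝ} (hε : 0 < ε) (hxy : x ≤ y)
    (hsub : Icc x y ⊆ Icc (0:ℝ) 1) (hU : ∀ t ∈ Icc x y, |v t - a| < ε) :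
    y - x ≤ 3 * ((hfin.toFinset.card : ℝ) + 1) * (2 * ε / c) ^ (((M:ℝ) + 1)⁻¹) := by
  have hrpow : (0:ℝ) ≤ (2 * ε / c) ^ (((M:ℝ) + 1)⁻¹) :=
    Real.rpow_nonneg (by positivity) _
  rcases eq_or_lt_of_le hxy with heq | hlt
  · rw [← heq]; simp; positivity
  set k : ℕ := hfin.toFinset.card with hk
  set N : ℕ := k + 1 with hN
  set L : ℝ := y - x with hL
  clear_value L
  have hLpos : 0 < L := by rw [hL]; linarith
  have hNpos : (0:ℝ) < N := by positivity
  set h : ℝ := L / N with hh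
  clear_value h
  have hhpos : 0 < h := by rw [hh]; exact div_pos hLpos hNpos
  set p : ℕ → ℝ := fun i => x + i * h with hp
  clear_value p
  have hpmono : ∀ i j : ℕ, i ≤ j → p i ≤ p j := by
    intro i j hij
    simp only [hp]
    have : (i:ℝ) ≤ (j:ℝ) := Nat.cast_le.2 hij
    nlinarith
  have hpig : ∃ i, i < N ∧ ∀ z ∈ Zset v, ¬ (p i < z ∧ z < p (i+1)) := by
    by_contra hcon
    push_neg at hcon
    have hcon' : ∀ i : ℕ, ∃ z : ℝ, i < N → (z ∈ Zset v ∧ p i < z ∧ z < p (i+1)) := by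
      intro i
      by_cases hi : i < N
      · obtain ⟨z, hz1, hz2⟩ := hcon i hi
        exact ⟨z, fun _ => ⟨hz1, hz2⟩⟩
      · exact ⟨0, fun h' => absurd h' hi⟩
    choose g hg using hcon'
    have hcard : (Finset.range N).card ≤ hfin.toFinset.card := by
      apply Finset.card_le_card_of_injOn g
      · intro i hi
        rw [Finset.mem_coe, Set.Finite.mem_toFinset]
        exact (hg i (Finset.mem_range.1 hi)).1
      · intro i hi j hj hij
        by_contra hne
        rcases Nat.lt_or_ge i j with hlt' | hge
        · obtain ⟨_, hgi1, hgi2⟩ := hg i (by simpa using hi)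
          obtain ⟨_, hgj1, hgj2⟩ := hg j (by simpa using hj)
          have : p (i+1) ≤ p j := hpmono _ _ hlt'
          have : g i < g j := by linarith
          exact absurd hij (ne_of_lt this)
        · have hlt' : j < i := lt_of_le_of_ne hge (Ne.symm hne)
          obtain ⟨_, hgi1, hgi2⟩ := hg i (by simpa using hi)
          obtain ⟨_, hgj1, hgj2⟩ := hg j (by simpa using hj)
          have : p (j+1) ≤ p i := hpmono _ _ hlt'
          have : g j < g i := by linarith
          exact absurd hij (ne_of_gt this)
    rw [Finset.card_range] at hcard
    omega
  obtain ⟨i, hiN, hfree⟩ := hpig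
  set u : ℝ := p i with hu
  set w : ℝ := p (i+1) with hw
  set δ : ℝ := h / 3 with hδ
  have hδpos : 0 < δ := by rw [hδ]; positivity
  clear_value δ
  have hwu : w = u + 3 * δ := by
    simp only [hw, hu, hp, hδ]
    push_cast
    ring
  have hxu : x ≤ u := by
    simp only [hu, hp]
    nlinarith [Nat.cast_nonneg (α := ℝ) i]
  have hwy : w ≤ y := by
    have hi1N : ((i:ℝ) + 1) ≤ (N:ℝ) := by
      push_cast
      exact_mod_cast Nat.succ_le_of_lt hiN
    simp only [hw, hp]
    push_cast
    have : ((i:ℝ)+1) * h ≤ N * h := by nlinarith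
    have hNh : (N:ℝ) * h = L := by
      rw [hh]; field_simp
    nlinarith [hNh]
  -- MVT on [u + δ, u + 2δ]
  have hlt2 : u + δ < u + 2*δ := by linarith
  obtain ⟨ξ, hξ, hslope⟩ := exists_deriv_eq_slope v hlt2
    ((vdiff han).continuous.continuousOn)
    ((vdiff han).differentiableOn)
  have hξxy : ξ ∈ Icc x y := by
    constructor
    · linarith [hξ.1]
    · have := hξ.2; linarith
  have hξ01 : ξ ∈ Icc (0:ℝ) 1 := hsub hξxy
  have hsep : ∀ z ∈ Zset v, δ ≤ |ξ - z| := by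
    intro z hz
    have hnot := hfree z hz
    rcases le_or_gt z u with hzu | hzu
    · have : δ ≤ ξ - z := by linarith [hξ.1]
      exact le_trans this (le_abs_self _)
    · have hwz : w ≤ z := by
        by_contra hcon
        push_neg at hcon
        exact hnot ⟨hzu, hcon⟩
      rw [abs_sub_comm]
      have : δ ≤ z - ξ := by
        have := hξ.2
        linarith [hwu]
      exact le_trans this (le_abs_self _)
  have hL1 : L ≤ 1 := by
    have h0 := hsub ⟨le_refl x, hxy⟩
    have h1 := hsub ⟨hxy, le_refl y⟩
    simp [hL]
    linarith [h0.1, h1.2]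
  have hδ3 : δ ≤ 3 := by
    have : h ≤ 1 := by
      rw [hh, div_le_one hNpos]
      have : (1:ℝ) ≤ N := by exact_mod_cast Nat.one_le_iff_ne_zero.2 (by omega)
      linarith
    linarith [hδ]
  have hkey := hloj ξ hξ01 δ hδpos.le hδ3 hsep
  -- bound the slope
  have hmemu : u + δ ∈ Icc x y := ⟨by linarith, by linarith [hwu]⟩
  have hmemw : u + 2*δ ∈ Icc x y := ⟨by linarith, by linarith [hwu]⟩
  have hnum : |v (u + 2*δ) - v (u + δ)| < 2 * ε := by
    calc |v (u + 2*δ) - v (u + δ)| ≤ |v (u + 2*δ) - a| + |a - v (u + δ)| :=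
          abs_sub_le _ _ _
      _ = |v (u + 2*δ) - a| + |v (u + δ) - a| := by rw [abs_sub_comm a]
      _ < ε + ε := add_lt_add (hU _ hmemw) (hU _ hmemu)
      _ = 2 * ε := by ring
  have hdd : u + 2*δ - (u + δ) = δ := by ring
  have hderiv : |deriv v ξ| = |v (u + 2*δ) - v (u + δ)| / δ := by
    rw [hslope, hdd, abs_div, abs_of_pos hδpos]
  have hfinal : c * δ ^ (M + 1) < 2 * ε := by
    have h1 : c * δ ^ M * δ ≤ |v (u + 2*δ) - v (u + δ)| := by
      rw [hderiv] at hkey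
      calc c * δ ^ M * δ ≤ (|v (u + 2*δ) - v (u + δ)| / δ) * δ := by
            exact mul_le_mul_of_nonneg_right hkey hδpos.le
        _ = |v (u + 2*δ) - v (u + δ)| := div_mul_cancel₀ _ (ne_of_gt hδpos)
    calc c * δ ^ (M+1) = c * δ ^ M * δ := by ring
      _ ≤ |v (u + 2*δ) - v (u + δ)| := h1
      _ < 2 * ε := hnum
  have hpow : δ ^ (M + 1) ≤ 2 * ε / c := by
    rw [le_div_iff₀ hc]
    linarith [hfinal]
  have hδle : δ ≤ (2 * ε / c) ^ (((M:ℝ) + 1)⁻¹) := by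
    have hδeq : δ = (δ ^ (M+1) : ℝ) ^ (((M:ℝ) + 1)⁻¹) := by
      rw [← Real.rpow_natCast δ (M+1), ← Real.rpow_mul hδpos.le]
      push_cast
      rw [mul_inv_cancel₀ (by positivity), Real.rpow_one]
    rw [hδeq]
    exact Real.rpow_le_rpow (by positivity) hpow (by positivity)
  have hNh : (N:ℝ) * h = L := by
    rw [hh]
    field_simp
  have hLval : L = 3 * (N:ℝ) * δ := by
    rw [hδ]
    rw [← hNh]
    ring
  rw [hLval]
  have hNk : (N:ℝ) = (k:ℝ) + 1 := by push_cast [hN]; ring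
  rw [hNk]
  have h3k : (0:ℝ) < 3 * ((k:ℝ) + 1) := by have := Nat.cast_nonneg (α := ℝ) k; linarith
  calc 3 * ((k:ℝ)+1) * δ ≤ 3 * ((k:ℝ)+1) * ((2 * ε / c) ^ (((M:ℝ) + 1)⁻¹)) :=
        mul_le_mul_of_nonneg_left hδle h3k.le
    _ = 3 * ((hfin.toFinset.card : ℝ) + 1) * (2 * ε / c) ^ (((M:ℝ) + 1)⁻¹) := by rw [hk]


lemma count_core (han : ∀ x : ℝ, AnalyticAt ℝ v x) (hnc : ∃ x y : ℝ, v x ≠ v y) (b : ℝ)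
    (T : Finset ℝ) (hsub : (↑T : Set ℝ) ⊆ {x | x ∈ Icc (0:ℝ) 1 ∧ v x = b}) :
    T.card ≤ (Z_finite han hnc).toFinset.card + 1 := by
  set Zf := (Z_finite han hnc).toFinset with hZf
  set k := Zf.card with hk
  by_contra hcon
  push_neg at hcon
  have hTne : T.Nonempty := Finset.card_pos.1 (by omega)
  set mx := T.max' hTne with hmx
  set T' := T.erase mx with hT'
  have hT'card : k + 1 ≤ T'.card := by
    rw [hT', Finset.card_erase_of_mem (T.max'_mem hTne)]
    omega
  have key : ∀ t : ℝ, ∃ ξ : ℝ, t ∈ T' →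
      (ξ ∈ Zf ∧ t < ξ ∧ ∀ u ∈ T, t < u → ξ < u) := by
    intro t
    by_cases ht : t ∈ T'
    swap
    · exact ⟨0, fun h => absurd h ht⟩
    have htT : t ∈ T := Finset.mem_of_mem_erase ht
    have htmx : t < mx :=
      lt_of_le_of_ne (T.le_max' t htT) (Finset.ne_of_mem_erase ht)
    set St := T.filter (fun u => t < u) with hSt
    have hSne : St.Nonempty := ⟨mx, Finset.mem_filter.2 ⟨T.max'_mem hTne, htmx⟩⟩
    set nxt := St.min' hSne with hnxt
    have hnxtmem := St.min'_mem hSne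
    rw [Finset.mem_filter] at hnxtmem
    obtain ⟨hnT, htn⟩ := hnxtmem
    have hvt : v t = b := (hsub htT).2
    have hvn : v nxt = b := (hsub hnT).2
    obtain ⟨ξ, hξmem, hξzero⟩ := exists_deriv_eq_zero htn
      ((vdiff han).continuous.continuousOn) (hvt.trans hvn.symm)
    refine ⟨ξ, fun _ => ⟨?_, hξmem.1, fun u hu htu => ?_⟩⟩
    · rw [hZf, Set.Finite.mem_toFinset]
      have h1 := (hsub htT).1
      have h2 := (hsub hnT).1
      exact ⟨⟨by linarith [hξmem.1.le, h1.1], by linarith [hξmem.2.le, h2.2]⟩, hξzero⟩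
    · have : nxt ≤ u := St.min'_le u (Finset.mem_filter.2 ⟨hu, htu⟩)
      linarith [hξmem.2]
  choose g hg using key
  have hcard : T'.card ≤ Zf.card := by
    apply Finset.card_le_card_of_injOn g
    · intro t ht
      exact (hg t ht).1
    · intro t₁ ht₁ t₂ ht₂ heq
      by_contra hne
      have ht₁' : t₁ ∈ T' := ht₁
      have ht₂' : t₂ ∈ T' := ht₂
      have ht₁T : t₁ ∈ T := Finset.mem_of_mem_erase ht₁'
      have ht₂T : t₂ ∈ T := Finset.mem_of_mem_erase ht₂'
      obtain ⟨hz₁, hlt₁, hall₁⟩ := hg t₁ ht₁'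
      obtain ⟨hz₂, hlt₂, hall₂⟩ := hg t₂ ht₂'
      rcases lt_trichotomy t₁ t₂ with h | h | h
      · have := hall₁ t₂ ht₂T h
        linarith
      · exact hne h
      · have := hall₂ t₁ ht₁T h
        linarith
  omega

lemma count (han : ∀ x : ℝ, AnalyticAt ℝ v x) (hnc : ∃ x y : ℝ, v x ≠ v y) (b : ℝ) :
    {x | x ∈ Icc (0:ℝ) 1 ∧ v x = b}.Finite ∧
    {x | x ∈ Icc (0:ℝ) 1 ∧ v x = b}.ncard ≤ (Z_finite han hnc).toFinset.card + 1 := by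
  set W := {x | x ∈ Icc (0:ℝ) 1 ∧ v x = b} with hW
  set k := (Z_finite han hnc).toFinset.card with hk
  have hfin : W.Finite := by
    by_contra hinf
    obtain ⟨T, hTsub, hTcard⟩ := (Set.Infinite.exists_subset_card_eq hinf (k + 2))
    have := count_core han hnc b T hTsub
    omega
  refine ⟨hfin, ?_⟩
  have h1 : (↑hfin.toFinset : Set ℝ) ⊆ W := by simp
  have h2 := count_core han hnc b hfin.toFinset h1
  rwa [Set.ncard_eq_toFinset_card W hfin]


end Stmt10

open Stmt10 in
theorem stmt_10 (v : ℝ → ℝ) (hper : Function.Periodic v 1)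
    (han : ∀ x : ℝ, AnalyticAt ℝ v x) (hnc : ∃ x y : ℝ, v x ≠ v y) :
    ∃ ε₀ : ℝ, 0 < ε₀ ∧ ∃ β : ℝ, 0 < β ∧ ∃ s : ℕ, 1 ≤ s ∧
      ∀ ε : ℝ, 0 < ε → ε ≤ ε₀ → ∀ a : ℝ,
        ∃ F : Finset (Set ℝ), F.card ≤ s ∧
          (∀ J ∈ F, J.OrdConnected ∧ EMetric.diam J ≤ ENNReal.ofReal (ε ^ β)) ∧
          {x : ℝ | x ∈ Set.Ico (0 : ℝ) 1 ∧ |v x - a| < ε} =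
            ⋃ J ∈ F, Int.fract '' J := by
  obtain ⟨c, hc, M, hloj⟩ := Stmt10.loj han hnc
  have hfin := Stmt10.Z_finite han hnc
  set k := hfin.toFinset.card with hk
  set γ : ℝ := ((M:ℝ) + 1)⁻¹ with hγdef
  set β : ℝ := ((M:ℝ) + 2)⁻¹ with hβdef
  have hγ : 0 < γ := by rw [hγdef]; positivity
  have hβ : 0 < β := by rw [hβdef]; positivity
  have hβγ : β < γ := by
    rw [hγdef, hβdef]
    apply inv_strictAnti₀ (by positivity)
    linarith
  set d : ℝ := γ - β with hddef
  have hdpos : 0 < d := by rw [hddef]; linarith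
  set A : ℝ := 3 * ((k:ℝ) + 1) * (2 / c) ^ γ with hAdef
  have hApos : 0 < A := by
    rw [hAdef]
    have : (0:ℝ) < (2/c) ^ γ := Real.rpow_pos_of_pos (by positivity) _
    positivity
  set ε₀ : ℝ := min 1 (A⁻¹ ^ d⁻¹) with hε₀def
  have hε₀pos : 0 < ε₀ := by
    rw [hε₀def]
    exact lt_min one_pos (Real.rpow_pos_of_pos (by positivity) _)
  refine ⟨ε₀, hε₀pos, β, hβ, 2 * k + 3, by omega, ?_⟩
  intro ε hεpos hεε₀ a
  -- the key numeric bound : A * ε ^ γ ≤ ε ^ β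
  have hkey : A * ε ^ γ ≤ ε ^ β := by
    have hε1 : ε ≤ 1 := le_trans hεε₀ (min_le_left _ _)
    have h2 : ε ≤ A⁻¹ ^ d⁻¹ := le_trans hεε₀ (min_le_right _ _)
    have h3 : ε ^ d ≤ (A⁻¹ ^ d⁻¹) ^ d := Real.rpow_le_rpow hεpos.le h2 hdpos.le
    have h4 : (A⁻¹ ^ d⁻¹ : ℝ) ^ d = A⁻¹ := by
      rw [← Real.rpow_mul (by positivity), inv_mul_cancel₀ (ne_of_gt hdpos), Real.rpow_one]
    have h5 : A * ε ^ d ≤ 1 := by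
      rw [h4] at h3
      calc A * ε ^ d ≤ A * A⁻¹ := mul_le_mul_of_nonneg_left h3 hApos.le
        _ = 1 := mul_inv_cancel₀ (ne_of_gt hApos)
    have h6 : ε ^ γ = ε ^ β * ε ^ d := by
      rw [← Real.rpow_add hεpos, hddef]; ring_nf
    calc A * ε ^ γ = (A * ε ^ d) * ε ^ β := by rw [h6]; ring
      _ ≤ 1 * ε ^ β := by
          exact mul_le_mul_of_nonneg_right h5 (Real.rpow_nonneg hεpos.le _)
      _ = ε ^ β := one_mul _
  -- set-up
  set Aset : Set ℝ := {x : ℝ | x ∈ Set.Ico (0 : ℝ) 1 ∧ |v x - a| < ε} with hAset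
  have hAsub : Aset ⊆ Ico (0:ℝ) 1 := fun x hx => hx.1
  have hUopen : IsOpen {x : ℝ | |v x - a| < ε} :=
    isOpen_lt (((vdiff han).continuous.sub continuous_const).abs) continuous_const
  set 𝒞 : Set (Set ℝ) := (fun t => connectedComponentIn Aset t) '' Aset with h𝒞
  have hCsub : ∀ C ∈ 𝒞, C ⊆ Aset := by
    rintro C ⟨t, ht, rfl⟩
    exact connectedComponentIn_subset _ _
  have hCNE : ∀ C ∈ 𝒞, C.Nonempty := by
    rintro C ⟨t, ht, rfl⟩
    exact ⟨t, mem_connectedComponentIn ht⟩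
  have hOC : ∀ C ∈ 𝒞, C.OrdConnected := by
    rintro C ⟨t, ht, rfl⟩
    exact isPreconnected_connectedComponentIn.ordConnected
  have hbdd : ∀ C ∈ 𝒞, BddBelow C := by
    intro C hC
    exact ⟨0, fun t ht => ((hCsub C hC) ht).1.1⟩
  -- diameter bound
  have hdiam : ∀ C ∈ 𝒞, ∀ x' ∈ C, ∀ y' ∈ C, x' ≤ y' → y' - x' ≤ ε ^ β := by
    intro C hC x' hx' y' hy' hle
    have hIcc : Icc x' y' ⊆ C := (hOC C hC).out hx' hy'
    have hIcc01 : Icc x' y' ⊆ Icc (0:ℝ) 1 := fun t ht =>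
      ⟨(hAsub (hCsub C hC (hIcc ht))).1, le_of_lt (hAsub (hCsub C hC (hIcc ht))).2⟩
    have hUc : ∀ t ∈ Icc x' y', |v t - a| < ε := fun t ht => (hCsub C hC (hIcc ht)).2
    have hb := Stmt10.short han hc hloj hfin hεpos hle hIcc01 hUc
    have hsplit : (2 * ε / c) ^ γ = (2 / c) ^ γ * ε ^ γ := by
      rw [show (2*ε/c) = (2/c)*ε by ring, Real.mul_rpow (by positivity) hεpos.le]
    calc y' - x' ≤ 3 * ((k:ℝ) + 1) * (2 * ε / c) ^ γ := hb
      _ = A * ε ^ γ := by rw [hsplit, hAdef]; ring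
      _ ≤ ε ^ β := hkey
  -- the finite set of possible infima
  set S : Set ℝ := insert (0:ℝ)
      ({x | x ∈ Icc (0:ℝ) 1 ∧ v x = a - ε} ∪ {x | x ∈ Icc (0:ℝ) 1 ∧ v x = a + ε}) with hS
  have hSfin : S.Finite :=
    (((Stmt10.count han hnc (a - ε)).1).union ((Stmt10.count han hnc (a + ε)).1)).insert 0
  have hScard : S.ncard ≤ 2 * k + 3 := by
    have h1 := (Stmt10.count han hnc (a - ε)).2
    have h2 := (Stmt10.count han hnc (a + ε)).2
    have h3 := Set.ncard_insert_le (0:ℝ)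
      ({x | x ∈ Icc (0:ℝ) 1 ∧ v x = a - ε} ∪ {x | x ∈ Icc (0:ℝ) 1 ∧ v x = a + ε})
    have h4 := Set.ncard_union_le {x | x ∈ Icc (0:ℝ) 1 ∧ v x = a - ε}
      {x | x ∈ Icc (0:ℝ) 1 ∧ v x = a + ε}
    rw [hS]
    omega
  -- membership of infima
  have hmem : ∀ C ∈ 𝒞, sInf C ∈ S := by
    intro C hC
    have hbd := hbdd C hC
    have hsubA := hCsub C hC
    obtain ⟨p, hpdef⟩ : ∃ p, p = sInf C := ⟨_, rfl⟩
    rw [← hpdef]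
    have hplow : ∀ t ∈ C, p ≤ t := fun t ht => hpdef ▸ csInf_le hbd ht
    have hp0 : 0 ≤ p := hpdef ▸ le_csInf (hCNE C hC) (fun t ht => ((hAsub (hsubA ht))).1)
    obtain ⟨t₀, ht₀⟩ := hCNE C hC
    have hp1 : p < 1 := lt_of_le_of_lt (hplow t₀ ht₀) (hAsub (hsubA ht₀)).2
    rcases eq_or_lt_of_le hp0 with h0 | hppos
    · rw [hS]; exact Or.inl h0.symm
    have hnotU : ¬ (|v p - a| < ε) := by
      intro hvp
      obtain ⟨δ₀, hδ₀pos, hball⟩ := Metric.isOpen_iff.1 hUopen p hvp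
      obtain ⟨δ, hδdef⟩ : ∃ δ, δ = min δ₀ (min p (1 - p)) := ⟨_, rfl⟩
      have hδpos : 0 < δ := by rw [hδdef]; exact lt_min hδ₀pos (lt_min hppos (by linarith))
      have hδδ₀ : δ ≤ δ₀ := by rw [hδdef]; exact min_le_left _ _
      have hδp : δ ≤ p := by
        rw [hδdef]; exact le_trans (min_le_right _ _) (min_le_left _ _)
      have hδ1p : δ ≤ 1 - p := by
        rw [hδdef]; exact le_trans (min_le_right _ _) (min_le_right _ _)
      have hIoosub : Ioo (p - δ) (p + δ) ⊆ Aset := by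
        intro t ht
        have ht1 : p - δ < t := ht.1
        have ht2 : t < p + δ := ht.2
        have htI : t ∈ Ico (0:ℝ) 1 := ⟨by linarith, by linarith⟩
        refine ⟨htI, hball ?_⟩
        rw [mem_ball, Real.dist_eq, abs_lt]
        exact ⟨by linarith, by linarith⟩
      obtain ⟨y₁, hy₁C, hy₁lt⟩ := exists_lt_of_csInf_lt (hCNE C hC)
        (by rw [← hpdef]; linarith : sInf C < p + δ)
      have hy₁mem : y₁ ∈ Ioo (p - δ) (p + δ) :=
        ⟨by linarith [hplow y₁ hy₁C], hy₁lt⟩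
      have hBsubC : Ioo (p - δ) (p + δ) ⊆ C := by
        have h1 := isPreconnected_Ioo.subset_connectedComponentIn hy₁mem hIoosub
        obtain ⟨x₀, hx₀, rfl⟩ := hC
        rwa [← connectedComponentIn_eq hy₁C] at h1
      have : p ≤ p - δ/2 := hplow _ (hBsubC ⟨by linarith, by linarith⟩)
      linarith
    have hple : |v p - a| ≤ ε := by
      have hclosed : IsClosed {t : ℝ | |v t - a| ≤ ε} :=
        isClosed_le (((vdiff han).continuous.sub continuous_const).abs) continuous_const
      have hpc : p ∈ closure C := hpdef ▸ csInf_mem_closure (hCNE C hC) hbd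
      have : closure C ⊆ {t : ℝ | |v t - a| ≤ ε} :=
        closure_minimal (fun t ht => le_of_lt (hsubA ht).2) hclosed
      exact this hpc
    have heq : |v p - a| = ε := le_antisymm hple (not_lt.1 hnotU)
    rcases (abs_eq hεpos.le).1 heq with h | h
    · rw [hS]
      exact Or.inr (Or.inr ⟨⟨hp0, hp1.le⟩, by linarith⟩)
    · rw [hS]
      exact Or.inr (Or.inl ⟨⟨hp0, hp1.le⟩, by linarith⟩)
  -- injectivity of sInf on components
  have hinj : Set.InjOn sInf 𝒞 := by
    intro C₁ h₁ C₂ h₂ heq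
    have hbd₁ := hbdd C₁ h₁
    have hbd₂ := hbdd C₂ h₂
    have hsub₁ := hCsub C₁ h₁
    have hsub₂ := hCsub C₂ h₂
    obtain ⟨p, hpdef⟩ : ∃ p, p = sInf C₁ := ⟨_, rfl⟩
    have hpdef₂ : p = sInf C₂ := by rw [hpdef, heq]
    have hplow₁ : ∀ t ∈ C₁, p ≤ t := fun t ht => hpdef ▸ csInf_le hbd₁ ht
    have hplow₂ : ∀ t ∈ C₂, p ≤ t := fun t ht => hpdef₂ ▸ csInf_le hbd₂ ht
    by_cases hpA : p ∈ Aset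
    · -- p belongs to both components
      have hpin : ∀ C, C ∈ 𝒞 → (∀ t ∈ C, p ≤ t) → sInf C = p → p ∈ C := by
        intro C hC hplow hCp
        have hbd := hbdd C hC
        obtain ⟨δ₀, hδ₀pos, hball⟩ := Metric.isOpen_iff.1 hUopen p hpA.2
        have hBsub : Ioo (p - δ₀) (p + δ₀) ∩ Ico (0:ℝ) 1 ⊆ Aset := by
          rintro t ⟨ht1, ht2⟩
          refine ⟨ht2, hball ?_⟩
          rw [mem_ball, Real.dist_eq, abs_lt]
          exact ⟨by linarith [ht1.1], by linarith [ht1.2]⟩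
        have hBpre : IsPreconnected (Ioo (p - δ₀) (p + δ₀) ∩ Ico (0:ℝ) 1) :=
          (Set.ordConnected_Ioo.inter Set.ordConnected_Ico).isPreconnected
        obtain ⟨y, hyC, hylt⟩ := exists_lt_of_csInf_lt (hCNE C hC)
          (by rw [hCp]; linarith : sInf C < p + δ₀)
        have hpy : p ≤ y := hplow y hyC
        have hymem : y ∈ Ioo (p - δ₀) (p + δ₀) ∩ Ico (0:ℝ) 1 :=
          ⟨⟨by linarith, hylt⟩, hAsub (hCsub C hC hyC)⟩
        have h1 := hBpre.subset_connectedComponentIn hymem hBsub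
        have hpB : p ∈ Ioo (p - δ₀) (p + δ₀) ∩ Ico (0:ℝ) 1 :=
          ⟨⟨by linarith, by linarith⟩, hpA.1⟩
        obtain ⟨x₀, hx₀, rfl⟩ := hC
        rw [← connectedComponentIn_eq hyC] at h1
        exact h1 hpB
      have hp₁ : p ∈ C₁ := hpin C₁ h₁ hplow₁ hpdef.symm
      have hp₂ : p ∈ C₂ := hpin C₂ h₂ hplow₂ hpdef₂.symm
      obtain ⟨x₁, hx₁, rfl⟩ := h₁
      obtain ⟨x₂, hx₂, rfl⟩ := h₂
      show connectedComponentIn Aset x₁ = connectedComponentIn Aset x₂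
      rw [connectedComponentIn_eq hp₁, connectedComponentIn_eq hp₂]
    · -- p is in neither component
      have hgt₁ : ∀ t ∈ C₁, p < t := by
        intro t ht
        rcases eq_or_lt_of_le (hplow₁ t ht) with h | h
        · exact absurd (show p ∈ Aset by rw [h]; exact hsub₁ ht) hpA
        · exact h
      have hgt₂ : ∀ t ∈ C₂, p < t := by
        intro t ht
        rcases eq_or_lt_of_le (hplow₂ t ht) with h | h
        · exact absurd (show p ∈ Aset by rw [h]; exact hsub₂ ht) hpA
        · exact h
      obtain ⟨y₁, hy₁⟩ := hCNE C₁ h₁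
      obtain ⟨y₂, hy₂C, hy₂lt⟩ := exists_lt_of_csInf_lt (hCNE C₂ h₂)
        (by rw [← hpdef₂]; exact hgt₁ y₁ hy₁ : sInf C₂ < y₁)
      obtain ⟨y₁', hy₁'C, hy₁'lt⟩ := exists_lt_of_csInf_lt (hCNE C₁ h₁)
        (by rw [← hpdef]; exact hgt₂ y₂ hy₂C : sInf C₁ < y₂)
      have hcommon : y₂ ∈ C₁ := (hOC C₁ h₁).out hy₁'C hy₁ ⟨hy₁'lt.le, hy₂lt.le⟩
      obtain ⟨x₁, hx₁, rfl⟩ := h₁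
      obtain ⟨x₂, hx₂, rfl⟩ := h₂
      show connectedComponentIn Aset x₁ = connectedComponentIn Aset x₂
      rw [connectedComponentIn_eq hcommon, connectedComponentIn_eq hy₂C]
  -- finiteness of the set of components
  have himg : sInf '' 𝒞 ⊆ S := by
    rintro q ⟨C, hC, rfl⟩
    exact hmem C hC
  have h𝒞fin : 𝒞.Finite := Set.Finite.of_finite_image (hSfin.subset himg) hinj
  have h𝒞card : 𝒞.ncard ≤ 2 * k + 3 := by
    calc 𝒞.ncard = (sInf '' 𝒞).ncard := (Set.ncard_image_of_injOn hinj).symm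
      _ ≤ S.ncard := Set.ncard_le_ncard himg hSfin
      _ ≤ 2 * k + 3 := hScard
  refine ⟨h𝒞fin.toFinset, ?_, ?_, ?_⟩
  · rw [← Set.ncard_eq_toFinset_card 𝒞 h𝒞fin]
    exact h𝒞card
  · intro J hJ
    rw [Set.Finite.mem_toFinset] at hJ
    refine ⟨hOC J hJ, ?_⟩
    apply EMetric.diam_le
    intro x' hx' y' hy'
    rw [edist_dist, Real.dist_eq]
    apply ENNReal.ofReal_le_ofReal
    rcases le_total x' y' with h | h
    · rw [abs_of_nonpos (by linarith)]
      have := hdiam J hJ x' hx' y' hy' h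
      linarith
    · rw [abs_of_nonneg (by linarith)]
      exact hdiam J hJ y' hy' x' hx' h
  · ext t
    simp only [Set.mem_iUnion, Set.Finite.mem_toFinset]
    constructor
    · intro ht
      refine ⟨connectedComponentIn Aset t, ⟨t, ht, rfl⟩, t, mem_connectedComponentIn ht, ?_⟩
      exact Int.fract_eq_self.2 ⟨ht.1.1, ht.1.2⟩
    · rintro ⟨J, hJ, u, huJ, rfl⟩
      have huA : u ∈ Aset := hCsub J hJ huJ
      rwa [Int.fract_eq_self.2 ⟨huA.1.1, huA.1.2⟩]
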